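/- If p is a prime power, then H(p+1, p) = p² + p; that is, there exist p+1 pairwise disjoint p-element Golomb rulers contained in {1, 2, ..., p²+p}, and p²+p is the least positive integer n for which p+1 pairwise disjoint p-element Golomb rulers contained in {1, ..., n} exist. (Theorem 4, first part.) -/

import Mathlib

/-- A finite set of naturals is a Golomb ruler if all differences of pairs of
distinct elements are distinct. -/
def IsGolomb (S : Finset ℕ) : Prop :=
  ∀ a ∈ S, ∀ b ∈ S, ∀ c ∈ S, ∀ d ∈ S, a ≠ b → c ≠ d →
    (a : ℤ) - (b : ℤ) = (c : ℤ) - (d : ℤ) → a = c ∧ b = d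

/-- `A` contains `I` pairwise disjoint `J`-element Golomb rulers. -/
def ContainsDGR (I J : ℕ) (A : Finset ℕ) : Prop :=
  ∃ f : Fin I → Finset ℕ,
    (∀ i, (f i).card = J ∧ f i ⊆ A ∧ IsGolomb (f i)) ∧
    ∀ i j, i ≠ j → Disjoint (f i) (f j)

/-- There is an `(I,J,n)`-DGR: `I` pairwise disjoint `J`-element Golomb rulers,
each a subset of `{1, 2, ..., n}`. -/
def HasDGR (I J n : ℕ) : Prop := ContainsDGR I J (Finset.Icc 1 n)

/-- `H I J` is the least positive `n` such that an `(I,J,n)`-DGR exists. -/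
noncomputable def H (I J : ℕ) : ℕ := sInf {n : ℕ | 0 < n ∧ HasDGR I J n}

open Finset

lemma hasDGR_le (I J m : ℕ) (h : HasDGR I J m) : I * J ≤ m := by
  classical
  obtain ⟨f, h1, h2⟩ := h
  have hcard : (Finset.univ.biUnion f).card = I * J := by
    rw [Finset.card_biUnion (fun i _ j _ hij => h2 i j hij)]
    simp only [fun i => (h1 i).1, Finset.sum_const, Finset.card_univ, Fintype.card_fin,
      smul_eq_mul]
  have hsub : Finset.univ.biUnion f ⊆ Finset.Icc 1 m := by
    intro x hx
    rcases Finset.mem_biUnion.1 hx with ⟨i, _, hi⟩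
    exact (h1 i).2.1 hi
  have := Finset.card_le_card hsub
  rw [hcard, Nat.card_Icc] at this
  omega

lemma dgr_of_singer (q : ℕ) (hq : 2 ≤ q) (D : Finset ℕ)
    (hDsub : ∀ x ∈ D, x < q ^ 2 + q + 1)
    (hcard : D.card = q + 1)
    (huniq : ∀ x ∈ D, ∀ y ∈ D, ∀ z ∈ D, ∀ w ∈ D, x ≠ y →
      ((q ^ 2 + q + 1 : ℕ) : ℤ) ∣ ((x : ℤ) - y) - ((z : ℤ) - w) → x = z ∧ y = w) :
    HasDGR (q + 1) q (q ^ 2 + q) := by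
  classical
  set n : ℕ := q ^ 2 + q + 1 with hn
  have hnpos : 0 < n := by positivity
  let e := D.equivFinOfCardEq hcard
  let d : Fin (q + 1) → ℕ := fun i => (e.symm i : ℕ)
  have hdD : ∀ i, d i ∈ D := fun i => (e.symm i).2
  have hdinj : Function.Injective d := fun i j h => by
    have := e.symm.injective (Subtype.ext h); exact this
  let f : Fin (q + 1) → Finset ℕ :=
    fun i => (D.erase (d i)).image (fun x => (x + n - d i) % n)
  -- basic bounds
  have hlt : ∀ x ∈ D, x < n := hDsub
  -- congruence: value of image ≡ x - d i mod n
  have key : ∀ i, ∀ x ∈ D, (((x + n - d i) % n : ℕ) : ℤ) ≡ (x : ℤ) - d i [ZMOD n] := by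
    intro i x hx
    have hdi := hlt _ (hdD i)
    have h1 : (d i) ≤ x + n := by omega
    have h2 : ((x + n - d i : ℕ) : ℤ) = (x : ℤ) + n - d i := by
      push_cast [Nat.cast_sub h1]; ring
    calc (((x + n - d i) % n : ℕ) : ℤ) ≡ ((x + n - d i : ℕ) : ℤ) [ZMOD n] := by
          have h3 : (((x + n - d i) % n : ℕ) : ℤ) = ((x + n - d i : ℕ) : ℤ) % (n : ℤ) := by
            push_cast; ring
          rw [Int.ModEq, h3, Int.emod_emod_of_dvd _ dvd_rfl]
      _ = (x : ℤ) + n - d i := h2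
      _ ≡ (x : ℤ) - d i [ZMOD n] :=
          Int.ModEq.symm (Int.modEq_iff_dvd.2 ⟨1, by ring⟩)
  -- value range
  have hval : ∀ i, ∀ x ∈ D, x ≠ d i → 1 ≤ (x + n - d i) % n ∧ (x + n - d i) % n ≤ n - 1 := by
    intro i x hx hne
    have hdi := hlt _ (hdD i)
    have hxlt := hlt _ hx
    have hmod := Nat.mod_lt (x + n - d i) hnpos
    constructor
    · rcases Nat.lt_or_ge x (d i) with hcase | hcase
      · have : x + n - d i < n := by omega
        rw [Nat.mod_eq_of_lt this]; omega
      · have h3 : x + n - d i = (x - d i) + n := by omega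
        rw [h3, Nat.add_mod_right, Nat.mod_eq_of_lt (by omega)]; omega
    · omega
  -- injectivity of the map on D
  have hinjD : ∀ i, ∀ x ∈ D, ∀ y ∈ D, (x + n - d i) % n = (y + n - d i) % n → x = y := by
    intro i x hx y hy hxy
    have h1 := key i x hx
    have h2 := key i y hy
    rw [hxy] at h1
    have h3 : ((x : ℤ) - d i) ≡ ((y : ℤ) - d i) [ZMOD n] := h1.symm.trans h2
    have h4 : (n : ℤ) ∣ ((y : ℤ) - d i) - ((x : ℤ) - d i) := Int.ModEq.dvd h3
    have hxlt := hlt _ hx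
    have hylt := hlt _ hy
    have h5 : ((y : ℤ) - d i) - ((x : ℤ) - d i) = (y : ℤ) - x := by ring
    rw [h5] at h4
    have h6 : (y : ℤ) - x = 0 := Int.eq_zero_of_abs_lt_dvd h4 (by rw [abs_lt]; omega)
    omega
  refine ⟨f, fun i => ⟨?_, ?_, ?_⟩, ?_⟩
  · -- card
    have hinj : Set.InjOn (fun x => (x + n - d i) % n) (D.erase (d i)) := by
      intro x hx y hy hxy
      exact hinjD i x (Finset.mem_of_mem_erase hx) y (Finset.mem_of_mem_erase hy) hxy
    rw [Finset.card_image_of_injOn hinj, Finset.card_erase_of_mem (hdD i), hcard]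
    omega
  · -- subset Icc
    intro v hv
    rcases Finset.mem_image.1 hv with ⟨x, hx, rfl⟩
    have hne := Finset.ne_of_mem_erase hx
    have := hval i x (Finset.mem_of_mem_erase hx) hne
    rw [Finset.mem_Icc]
    omega
  · -- Golomb
    intro a ha b hb c hc g hg hab hcg habcg
    rcases Finset.mem_image.1 ha with ⟨x, hx', rfl⟩
    rcases Finset.mem_image.1 hb with ⟨y, hy', rfl⟩
    rcases Finset.mem_image.1 hc with ⟨z, hz', rfl⟩
    rcases Finset.mem_image.1 hg with ⟨w, hw', rfl⟩
    have hx := Finset.mem_of_mem_erase hx'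
    have hy := Finset.mem_of_mem_erase hy'
    have hz := Finset.mem_of_mem_erase hz'
    have hw := Finset.mem_of_mem_erase hw'
    have hxy : x ≠ y := fun hcase => hab (by rw [hcase])
    have h1 := key i x hx
    have h2 := key i y hy
    have h3 := key i z hz
    have h4 := key i w hw
    have hcong : ((x : ℤ) - y) ≡ ((z : ℤ) - w) [ZMOD n] := by
      have l : ((x : ℤ) - d i) - ((y : ℤ) - d i) ≡ ((z : ℤ) - d i) - ((w : ℤ) - d i) [ZMOD n] := by
        calc ((x : ℤ) - d i) - ((y : ℤ) - d i)
            ≡ (((x + n - d i) % n : ℕ) : ℤ) - (((y + n - d i) % n : ℕ) : ℤ) [ZMOD n] :=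
              (h1.symm).sub (h2.symm)
          _ = (((z + n - d i) % n : ℕ) : ℤ) - (((w + n - d i) % n : ℕ) : ℤ) := habcg
          _ ≡ ((z : ℤ) - d i) - ((w : ℤ) - d i) [ZMOD n] := h3.sub h4
      have e1 : ((x : ℤ) - d i) - ((y : ℤ) - d i) = (x : ℤ) - y := by ring
      have e2 : ((z : ℤ) - d i) - ((w : ℤ) - d i) = (z : ℤ) - w := by ring
      rwa [e1, e2] at l
    have := huniq x hx y hy z hz w hw hxy (by
      have := Int.ModEq.dvd hcong
      exact (dvd_sub_comm.1 this))
    exact ⟨by rw [this.1], by rw [this.2]⟩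
  · -- disjoint
    intro i j hij
    rw [Finset.disjoint_left]
    intro v hvi hvj
    rcases Finset.mem_image.1 hvi with ⟨x, hx', hxv⟩
    rcases Finset.mem_image.1 hvj with ⟨y, hy', hyv⟩
    have hx := Finset.mem_of_mem_erase hx'
    have hy := Finset.mem_of_mem_erase hy'
    have hxne := Finset.ne_of_mem_erase hx'
    have h1 := key i x hx
    have h2 := key j y hy
    rw [hxv] at h1
    rw [hyv] at h2
    have hcong : ((x : ℤ) - d i) ≡ ((y : ℤ) - d j) [ZMOD n] := h1.symm.trans h2
    have := huniq x hx (d i) (hdD i) y hy (d j) (hdD j) hxne (dvd_sub_comm.1 (Int.ModEq.dvd hcong))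
    exact hij (hdinj this.2)


set_option maxHeartbeats 1000000 in
lemma singer_abstract (q : ℕ) (hq : 2 ≤ q) (K : Type*) [Field K] [Fintype K]
    [DecidableEq K]
    (F : Subfield K) (hF : ∀ x : K, x ∈ F ↔ x ^ q = x)
    (hcardK : Fintype.card K = q ^ 3) :
    ∃ D : Finset ℕ, (∀ x ∈ D, x < q ^ 2 + q + 1) ∧ D.card = q + 1 ∧
      (∀ x ∈ D, ∀ y ∈ D, ∀ z ∈ D, ∀ w ∈ D, x ≠ y →
        ((q ^ 2 + q + 1 : ℕ) : ℤ) ∣ ((x : ℤ) - y) - ((z : ℤ) - w) → x = z ∧ y = w) := by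
  classical
  set n : ℕ := q ^ 2 + q + 1 with hn
  set N : ℕ := q ^ 3 - 1 with hN
  have hnpos : 0 < n := by positivity
  have hNn : N = n * (q - 1) := by
    obtain ⟨m, rfl⟩ : ∃ m, q = m + 2 := ⟨q - 2, by omega⟩
    simp only [hN, hn]
    have h21 : m + 2 - 1 = m + 1 := by omega
    have e1 : ((m+2) ^ 2 + (m+2) + 1) * (m + 1) = m^3 + 6*m^2 + 12*m + 7 := by ring
    have e2 : (m+2) ^ 3 = m^3 + 6*m^2 + 12*m + 8 := by ring
    rw [h21, e1, e2]
    omega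
  -- generator
  obtain ⟨g, hg⟩ := IsCyclic.exists_generator (α := Kˣ)
  have hordg : orderOf g = N := by
    rw [orderOf_eq_card_of_forall_mem_zpowers hg, Nat.card_eq_fintype_card,
      Fintype.card_units, hcardK]
  have hNpos : 0 < N := by
    have : 8 ≤ q ^ 3 := by
      calc (8:ℕ) = 2 ^ 3 := by norm_num
        _ ≤ q ^ 3 := Nat.pow_le_pow_left hq 3
    omega
  -- unit membership in F
  have hFu : ∀ x : Kˣ, ((x : K) ∈ F) ↔ x ^ (q - 1) = 1 := by
    intro x
    rw [hF]
    constructor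
    · intro hx
      have hx' : (x : K) ^ (q - 1) * x = 1 * x := by
        rw [one_mul, ← pow_succ]
        have hq1 : q - 1 + 1 = q := by omega
        rw [hq1, hx]
      have hval : (x : K) ^ (q - 1) = 1 := mul_right_cancel₀ (Units.ne_zero x) hx'
      exact Units.ext (by rw [Units.val_pow_eq_pow_val, hval, Units.val_one])
    · intro hx
      have hval : (x : K) ^ (q - 1) = 1 := by
        have := congrArg Units.val hx
        rwa [Units.val_pow_eq_pow_val, Units.val_one] at this
      calc (x : K) ^ q = (x : K) ^ (q - 1) * x := by
            rw [← pow_succ]; congr 1; omega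
        _ = x := by rw [hval, one_mul]
  -- exponent divisibility
  have hgF : ∀ t : ℤ, ((g ^ t : Kˣ) : K) ∈ F ↔ (n : ℤ) ∣ t := by
    intro t
    rw [hFu, ← zpow_natCast (g ^ t) (q - 1), ← zpow_mul, ← orderOf_dvd_iff_zpow_eq_one,
      hordg, hNn]
    constructor
    · intro hdvd
      have h1 : ((n : ℤ) * (q - 1 : ℕ)) ∣ t * (q - 1 : ℕ) := by
        push_cast at hdvd ⊢
        convert hdvd using 2
      have hne : ((q - 1 : ℕ) : ℤ) ≠ 0 := Nat.cast_ne_zero.2 (by omega)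
      exact (mul_dvd_mul_iff_right hne).1 h1
    · rintro ⟨s, rfl⟩
      exact ⟨s, by push_cast; ring⟩
  have hgFn : ∀ m : ℕ, n ∣ m → ((g ^ m : Kˣ) : K) ∈ F := by
    intro m hm
    have := (hgF (m : ℤ)).2 (by exact_mod_cast hm)
    rwa [zpow_natCast] at this
  -- card of F via zpowers of h
  set h : Kˣ := g ^ n with hh
  have hordh : orderOf h = q - 1 := by
    rw [hh, orderOf_pow, hordg, hNn, Nat.gcd_eq_right ⟨q - 1, rfl⟩,
      Nat.mul_div_cancel_left _ hnpos]
  have hzpow : ∀ x : Kˣ, x ^ (q - 1) = 1 ↔ x ∈ Subgroup.zpowers h := by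
    intro x
    constructor
    · intro hx
      obtain ⟨t, ht⟩ := Subgroup.mem_zpowers_iff.1 (hg x)
      have h1 : g ^ (t * (q - 1 : ℕ)) = 1 := by
        rw [zpow_mul, zpow_natCast, ht, hx]
      have h2 : ((orderOf g : ℕ) : ℤ) ∣ t * (q - 1 : ℕ) := orderOf_dvd_iff_zpow_eq_one.2 h1
      rw [hordg, hNn] at h2
      have hne : ((q - 1 : ℕ) : ℤ) ≠ 0 := Nat.cast_ne_zero.2 (by omega)
      have h3 : (n : ℤ) ∣ t := by
        refine (mul_dvd_mul_iff_right hne).1 ?_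
        push_cast at h2 ⊢
        convert h2 using 2
      obtain ⟨s, rfl⟩ := h3
      refine Subgroup.mem_zpowers_iff.2 ⟨s, ?_⟩
      rw [hh, ← zpow_natCast g n, ← zpow_mul, ← ht]
    · intro hx
      obtain ⟨s, rfl⟩ := Subgroup.mem_zpowers_iff.1 hx
      rw [← zpow_natCast (h ^ s) (q - 1), ← zpow_mul, hh, ← zpow_natCast g n, ← zpow_mul]
      refine orderOf_dvd_iff_zpow_eq_one.1 ?_
      rw [hordg, hNn]
      exact ⟨s, by push_cast; ring⟩
  -- counting helper
  have hcount : ∀ (S : Set K) (A : Set Kˣ),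
      (∀ x : K, x ∈ S ↔ x = 0 ∨ ∃ u ∈ A, (u : K) = x) → S.ncard = A.ncard + 1 := by
    intro S A hSA
    have hSeq : S = insert (0 : K) ((fun u : Kˣ => (u : K)) '' A) := by
      ext x
      rw [hSA x]
      simp [eq_comm]
    rw [hSeq, Set.ncard_insert_of_notMem (by simp), Set.ncard_image_of_injective _ (fun a b hab => Units.ext hab)]
  have hFset : ∀ x : K, x ∈ (F : Set K) ↔ x = 0 ∨
      ∃ u ∈ (Subgroup.zpowers h : Set Kˣ), (u : K) = x := by
    intro x
    constructor
    · intro hx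
      by_cases h0 : x = 0
      · exact Or.inl h0
      · exact Or.inr ⟨Units.mk0 x h0, (hzpow _).1 ((hFu _).1 hx), rfl⟩
    · rintro (rfl | ⟨u, hu, rfl⟩)
      · exact F.zero_mem
      · exact (hFu u).2 ((hzpow u).2 hu)
  have hFncard : (F : Set K).ncard = q := by
    rw [hcount _ _ hFset]
    have : (Subgroup.zpowers h : Set Kˣ).ncard = q - 1 := by
      rw [← Nat.card_coe_set_eq]
      have : Nat.card (Subgroup.zpowers h : Set Kˣ) = Nat.card (Subgroup.zpowers h) := rfl
      rw [this, Nat.card_zpowers, hordh]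
    omega
  haveI : Module.Finite F K := Module.Finite.of_finite
  have hFq : Fintype.card F = q := by
    rw [← Nat.card_eq_fintype_card]
    have : Nat.card F = Nat.card (F : Set K) := rfl
    rw [this, Nat.card_coe_set_eq, hFncard]
  have hrank : Module.finrank F K = 3 := by
    have hc := Module.card_eq_pow_finrank (K := F) (V := K)
    rw [hFq, hcardK] at hc
    exact (Nat.pow_right_injective hq hc).symm
  -- pick x₀ ∉ F
  obtain ⟨x₀, hx₀⟩ : ∃ x₀ : K, x₀ ∉ F := by
    by_contra hcon
    push_neg at hcon
    have hinj : Function.Injective (fun x : K => (⟨x, hcon x⟩ : F)) :=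
      fun a b hab => congrArg Subtype.val hab
    have := Fintype.card_le_of_injective _ hinj
    rw [hFq, hcardK] at this
    nlinarith
  -- the plane W
  set W : Submodule F K := Submodule.span F {1, x₀} with hW
  have h1W : (1 : K) ∈ W := Submodule.subset_span (by simp)
  have hx₀W : x₀ ∈ W := Submodule.subset_span (by simp)
  have hFW : ∀ c : K, c ∈ F → ∀ v ∈ W, c * v ∈ W := by
    intro c hc v hv
    have := W.smul_mem (⟨c, hc⟩ : F) hv
    simpa [Subfield.smul_def, smul_eq_mul] using this
  have hmemF_of_mul_one : ∀ c : F, (c : K) * 1 ∈ F := fun c => by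
    rw [mul_one]; exact c.2
  have hWrank : Module.finrank F W = 2 := by
    have hle : Module.finrank F W ≤ 2 := by
      have h2 := finrank_span_le_card (R := F) ({1, x₀} : Set K)
      have hcard2 : ({1, x₀} : Set K).toFinset.card ≤ 2 := by
        rw [Set.toFinset_insert, Set.toFinset_singleton]
        exact (Finset.card_insert_le _ _).trans (by simp)
      rw [hW]
      omega
    have hge : 2 ≤ Module.finrank F W := by
      have hspan1 : Submodule.span F {(1 : K)} < W := by
        refine lt_of_le_of_ne (Submodule.span_mono (by simp)) ?_
        intro heq
        apply hx₀
        have hx : x₀ ∈ Submodule.span F {(1 : K)} := heq ▸ hx₀W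
        rcases Submodule.mem_span_singleton.1 hx with ⟨c, hc⟩
        rw [← hc, Subfield.smul_def, smul_eq_mul, mul_one]
        exact c.2
      have h1 : Module.finrank F (Submodule.span F {(1 : K)}) = 1 :=
        finrank_span_singleton one_ne_zero
      have := Submodule.finrank_lt_finrank_of_lt hspan1
      omega
    omega
  have hWcard : Fintype.card W = q ^ 2 := by
    rw [Module.card_eq_pow_finrank (K := F) (V := W), hFq, hWrank]
  -- stabilizer is F
  have hstabF : ∀ α : K, (∀ v ∈ W, α * v ∈ W) → α ∈ F := by
    have hMinv : ∀ β : K, (∀ v ∈ W, β * v ∈ W) → (∀ v ∈ W, β⁻¹ * v ∈ W) := by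
      intro β hstab v hv
      by_cases h0 : β = 0
      · rw [h0, inv_zero, zero_mul]; exact W.zero_mem
      have hinj : Function.Injective (fun w : W => (⟨β * w, hstab w w.2⟩ : W)) := by
        intro a b hab
        have h1 := congrArg Subtype.val hab
        simp only at h1
        exact Subtype.ext (mul_left_cancel₀ h0 h1)
      have hsurj := Finite.injective_iff_surjective.1 hinj
      obtain ⟨w, hw⟩ := hsurj ⟨v, hv⟩
      have h2 : β * w = v := congrArg Subtype.val hw
      have h3 : β⁻¹ * v = w := by rw [← h2, ← mul_assoc, inv_mul_cancel₀ h0, one_mul]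
      rw [h3]; exact w.2
    intro α hα
    set M : Set K := {β : K | ∀ v ∈ W, β * v ∈ W} with hM
    have hMmul : ∀ a ∈ M, ∀ b ∈ M, a * b ∈ M := fun a ha b hb v hv => by
      rw [mul_assoc]; exact ha _ (hb v hv)
    have hMone : (1 : K) ∈ M := fun v hv => by rwa [one_mul]
    let Mmod : Submodule F K :=
      { carrier := M
        add_mem' := by
          intro a b ha hb v hv
          rw [add_mul]; exact W.add_mem (ha v hv) (hb v hv)
        zero_mem' := by
          intro v hv
          rw [zero_mul]; exact W.zero_mem
        smul_mem' := by
          intro c x hx v hv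
          rw [Subfield.smul_def, smul_eq_mul, mul_assoc]
          exact hFW _ c.2 _ (hx v hv) }
    have hMW : Mmod ≤ W := fun β hβ => by
      have := hβ 1 h1W
      rwa [mul_one] at this
    have hfin : Module.finrank F Mmod ≤ 2 :=
      le_trans (Submodule.finrank_mono hMW) (le_of_eq hWrank)
    have hFM : Submodule.span F {(1 : K)} ≤ Mmod := by
      rw [Submodule.span_le]
      rintro x hx
      simp only [Set.mem_singleton_iff] at hx
      subst hx
      exact hMone
    rcases Nat.lt_or_ge (Module.finrank F Mmod) 2 with hlt | hge
    · have heq : Submodule.span F {(1 : K)} = Mmod :=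
        Submodule.eq_of_le_of_finrank_le hFM
          (by rw [finrank_span_singleton (one_ne_zero (α := K))]; omega)
      have hαmem : α ∈ Mmod := hα
      rw [← heq] at hαmem
      rcases Submodule.mem_span_singleton.1 hαmem with ⟨c, hc⟩
      rw [← hc, Subfield.smul_def, smul_eq_mul, mul_one]
      exact c.2
    · exfalso
      have h2 : Module.finrank F Mmod = 2 := le_antisymm hfin hge
      haveI : Fintype Mmod := Fintype.ofFinite _
      have hcM : Fintype.card Mmod = q ^ 2 := by
        rw [Module.card_eq_pow_finrank (K := F) (V := Mmod), hFq, h2]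
      let Mstar : Subgroup Kˣ :=
        { carrier := {u : Kˣ | (u : K) ∈ M}
          mul_mem' := by
            intro a b ha hb
            show ((a * b : Kˣ) : K) ∈ M
            rw [Units.val_mul]
            exact hMmul _ ha _ hb
          one_mem' := by
            show ((1 : Kˣ) : K) ∈ M
            rw [Units.val_one]
            exact hMone
          inv_mem' := by
            intro u hu
            show ((u⁻¹ : Kˣ) : K) ∈ M
            rw [Units.val_inv_eq_inv_val]
            exact hMinv _ hu }
      have hMset : ∀ x : K, x ∈ M ↔ x = 0 ∨ ∃ u ∈ (Mstar : Set Kˣ), (u : K) = x := by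
        intro x
        constructor
        · intro hx
          by_cases h0 : x = 0
          · exact Or.inl h0
          · exact Or.inr ⟨Units.mk0 x h0, hx, rfl⟩
        · rintro (rfl | ⟨u, hu, rfl⟩)
          · exact Mmod.zero_mem
          · exact hu
      have hMcount := hcount M (Mstar : Set Kˣ) hMset
      have hMn : M.ncard = q ^ 2 := by
        rw [← Nat.card_coe_set_eq]
        have e : Nat.card M = Nat.card Mmod := rfl
        rw [e, Nat.card_eq_fintype_card, hcM]
      have hMsn : (Mstar : Set Kˣ).ncard = Nat.card Mstar := by
        rw [← Nat.card_coe_set_eq]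
        rfl
      have hKu : Nat.card Kˣ = N := by
        rw [Nat.card_eq_fintype_card, Fintype.card_units, hcardK]
      have hL := Subgroup.card_subgroup_dvd_card Mstar
      rw [hKu] at hL
      have hMs : Nat.card Mstar = q ^ 2 - 1 := by
        rw [← hMsn]
        refine Nat.eq_sub_of_add_eq ?_
        rw [← hMcount]
        exact hMn
      rw [hMs] at hL
      have hdvd2 : (q ^ 2 - 1) ∣ (q - 1) := by
        have h3 : (q ^ 2 - 1) ∣ (q ^ 2 - 1) * q := dvd_mul_right _ _
        have h4 : N - (q ^ 2 - 1) * q = q - 1 := by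
          obtain ⟨m, rfl⟩ : ∃ m, q = m + 2 := ⟨q - 2, by omega⟩
          simp only [hN]
          have e0 : (m + 2) ^ 2 = m ^ 2 + 4 * m + 4 := by ring
          have e4 : (m + 2) ^ 2 - 1 = m ^ 2 + 4 * m + 3 := by omega
          have e3 : (m ^ 2 + 4 * m + 3) * (m + 2) = m ^ 3 + 6 * m ^ 2 + 11 * m + 6 := by ring
          have e2 : (m + 2) ^ 3 = m ^ 3 + 6 * m ^ 2 + 12 * m + 8 := by ring
          rw [e4, e3, e2]
          omega
        rw [← h4]
        exact Nat.dvd_sub hL h3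
      have hle := Nat.le_of_dvd (by omega) hdvd2
      obtain ⟨m, hm⟩ : ∃ m, q = m + 2 := ⟨q - 2, by omega⟩
      subst hm
      have e0 : (m + 2) ^ 2 = m ^ 2 + 4 * m + 4 := by ring
      rw [e0] at hle
      omega
  -- one-dimensional intersection
  have hdim1 : ∀ α : K, (∃ v₀ ∈ W, α * v₀ ∉ W) →
      ∀ u v : K, u ≠ 0 → u ∈ W → α * u ∈ W → v ∈ W → α * v ∈ W →
      ∃ c : F, v = (c : K) * u := by
    intro α hex u v hu huW hαu hvW hαv
    obtain ⟨v₀, hv₀W, hv₀⟩ := hex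
    set U : Submodule F K := W ⊓ Submodule.comap (LinearMap.mulLeft F α) W with hU
    have hUW : U ≤ W := inf_le_left
    have hUne : U ≠ W := by
      intro heq
      have hmem : v₀ ∈ U := heq.symm ▸ hv₀W
      exact hv₀ (by simpa [hU, LinearMap.mulLeft_apply] using hmem.2)
    have hlt : U < W := lt_of_le_of_ne hUW hUne
    have hfU : Module.finrank F U < 2 := by
      rw [← hWrank]
      exact Submodule.finrank_lt_finrank_of_lt hlt
    have huU : u ∈ U := ⟨huW, by simpa [hU, LinearMap.mulLeft_apply] using hαu⟩
    have hvU : v ∈ U := ⟨hvW, by simpa [hU, LinearMap.mulLeft_apply] using hαv⟩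
    have hspanU : Submodule.span F {u} = U := by
      refine Submodule.eq_of_le_of_finrank_le
        (Submodule.span_le.2 (by simpa using huU)) ?_
      rw [finrank_span_singleton hu]
      omega
    rcases Submodule.mem_span_singleton.1 (hspanU ▸ hvU) with ⟨c, hc⟩
    exact ⟨c, by rw [← hc, Subfield.smul_def, smul_eq_mul]⟩
  -- the difference set
  set D : Finset ℕ := (Finset.range n).filter (fun i => ((g ^ i : Kˣ) : K) ∈ W) with hD
  have hmemD : ∀ i, i ∈ D ↔ i < n ∧ ((g ^ i : Kˣ) : K) ∈ W := by
    intro i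
    rw [hD, Finset.mem_filter, Finset.mem_range]
  -- uniqueness
  have huniq : ∀ x ∈ D, ∀ y ∈ D, ∀ z ∈ D, ∀ w ∈ D, x ≠ y →
      ((n : ℕ) : ℤ) ∣ ((x : ℤ) - y) - ((z : ℤ) - w) → x = z ∧ y = w := by
    intro x hx y hy z hz w hw hxy hdvd
    obtain ⟨hxn, hxW⟩ := (hmemD x).1 hx
    obtain ⟨hyn, hyW⟩ := (hmemD y).1 hy
    obtain ⟨hzn, hzW⟩ := (hmemD z).1 hz
    obtain ⟨hwn, hwW⟩ := (hmemD w).1 hw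
    set α : Kˣ := g ^ ((x : ℤ) - y) with hα
    have hfF : ((g ^ (((x : ℤ) - y) - ((z : ℤ) - w)) : Kˣ) : K) ∈ F := (hgF _).2 hdvd
    have hxid : (α : K) * ((g ^ y : Kˣ) : K) = ((g ^ x : Kˣ) : K) := by
      rw [← Units.val_mul]
      congr 1
      rw [hα, ← zpow_natCast g y, ← zpow_add, ← zpow_natCast g x]
      congr 1
      ring
    have hzid : (α : K) * ((g ^ w : Kˣ) : K) =
        ((g ^ (((x : ℤ) - y) - ((z : ℤ) - w)) : Kˣ) : K) * ((g ^ z : Kˣ) : K) := by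
      rw [← Units.val_mul, ← Units.val_mul]
      congr 1
      rw [hα, ← zpow_natCast g w, ← zpow_natCast g z, ← zpow_add, ← zpow_add]
      congr 1
      ring
    have hαu : (α : K) * ((g ^ y : Kˣ) : K) ∈ W := by rw [hxid]; exact hxW
    have hαv : (α : K) * ((g ^ w : Kˣ) : K) ∈ W := by
      rw [hzid]; exact hFW _ hfF _ hzW
    by_cases hstab : ∀ v ∈ W, (α : K) * v ∈ W
    · exfalso
      have hmem : (α : K) ∈ F := hstabF _ hstab
      have hdvd2 : (n : ℤ) ∣ (x : ℤ) - y := (hgF _).1 hmem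
      have : (x : ℤ) - y = 0 :=
        Int.eq_zero_of_abs_lt_dvd hdvd2 (by rw [abs_lt]; omega)
      omega
    · push_neg at hstab
      obtain ⟨v₀, hv₀W, hv₀⟩ := hstab
      obtain ⟨c, hc⟩ := hdim1 (α : K) ⟨v₀, hv₀W, hv₀⟩ ((g ^ y : Kˣ) : K)
        ((g ^ w : Kˣ) : K) (Units.ne_zero _) hyW hαu hwW hαv
      have hcunit : ((g ^ ((w : ℤ) - y) : Kˣ) : K) = (c : K) := by
        have hid : ((g ^ ((w : ℤ) - y) : Kˣ) : K) * ((g ^ y : Kˣ) : K) =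
            ((g ^ w : Kˣ) : K) := by
          rw [← Units.val_mul]
          congr 1
          rw [← zpow_natCast g y, ← zpow_natCast g w, ← zpow_add]
          congr 1
          ring
        refine mul_right_cancel₀ (Units.ne_zero (g ^ y)) ?_
        rw [hid, hc]
      have hcF : ((g ^ ((w : ℤ) - y) : Kˣ) : K) ∈ F := by rw [hcunit]; exact c.2
      have hdvd3 : (n : ℤ) ∣ (w : ℤ) - y := (hgF _).1 hcF
      have hwy : (w : ℤ) - y = 0 :=
        Int.eq_zero_of_abs_lt_dvd hdvd3 (by rw [abs_lt]; omega)
      have hdvd4 : (n : ℤ) ∣ (x : ℤ) - z := by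
        have heq : ((x : ℤ) - y) - ((z : ℤ) - w) = ((x : ℤ) - z) + ((w : ℤ) - y) := by ring
        rw [heq, hwy, add_zero] at hdvd
        exact hdvd
      have hxz : (x : ℤ) - z = 0 :=
        Int.eq_zero_of_abs_lt_dvd hdvd4 (by rw [abs_lt]; omega)
      exact ⟨by omega, by omega⟩
  -- cardinality of D
  have hcardD : D.card = q + 1 := by
    have hper : ∀ i : ℕ, ((g ^ i : Kˣ) : K) ∈ W ↔ ((g ^ (i % n) : Kˣ) : K) ∈ W := by
      intro i
      have hi : i = n * (i / n) + i % n := (Nat.div_add_mod i n).symm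
      have hsplit : (g ^ i : Kˣ) = g ^ (n * (i / n)) * g ^ (i % n) := by
        rw [← pow_add, ← hi]
      have hfF : ((g ^ (n * (i / n)) : Kˣ) : K) ∈ F := hgFn _ ⟨i / n, rfl⟩
      constructor
      · intro hiW
        have hinvF : (((g ^ (n * (i / n)) : Kˣ)⁻¹ : Kˣ) : K) ∈ F := by
          rw [Units.val_inv_eq_inv_val]; exact F.inv_mem hfF
        have hid : ((g ^ (i % n) : Kˣ) : K) =
            (((g ^ (n * (i / n)) : Kˣ)⁻¹ : Kˣ) : K) * ((g ^ i : Kˣ) : K) := by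
          rw [← Units.val_mul]
          congr 1
          rw [hsplit, ← mul_assoc, inv_mul_cancel, one_mul]
        rw [hid]
        exact hFW _ hinvF _ hiW
      · intro hiW
        have hid : ((g ^ i : Kˣ) : K) =
            ((g ^ (n * (i / n)) : Kˣ) : K) * ((g ^ (i % n) : Kˣ) : K) := by
          rw [← Units.val_mul, ← hsplit]
        rw [hid]
        exact hFW _ hfF _ hiW
    set T : Finset ℕ := (Finset.range N).filter (fun i => ((g ^ i : Kˣ) : K) ∈ W) with hT
    set UW : Finset Kˣ := Finset.univ.filter (fun u : Kˣ => (u : K) ∈ W) with hUW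
    have hTcard : T.card = UW.card := by
      refine Finset.card_bij (fun i _ => g ^ i) ?_ ?_ ?_
      · intro i hi
        rw [hUW, Finset.mem_filter]
        exact ⟨Finset.mem_univ _, (Finset.mem_filter.1 hi).2⟩
      · intro a ha b hb hab
        have ha' := Finset.mem_range.1 (Finset.mem_filter.1 ha).1
        have hb' := Finset.mem_range.1 (Finset.mem_filter.1 hb).1
        exact pow_injOn_Iio_orderOf (by rw [hordg]; exact ha') (by rw [hordg]; exact hb') hab
      · intro u hu
        obtain ⟨k, hk⟩ := Subgroup.mem_zpowers_iff.1 (hg u)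
        have hnn : (0 : ℤ) ≤ k % (N : ℤ) := Int.emod_nonneg k (by exact_mod_cast hNpos.ne')
        have hg2 : (g ^ ((k % (N : ℤ)).toNat) : Kˣ) = u := by
          rw [← zpow_natCast g, Int.toNat_of_nonneg hnn]
          have h5 := zpow_mod_orderOf g k
          rw [hordg] at h5
          rw [h5, hk]
        refine ⟨(k % (N : ℤ)).toNat, ?_, hg2⟩
        rw [hT, Finset.mem_filter, Finset.mem_range]
        constructor
        · rw [Int.toNat_lt' hNpos]
          exact Int.emod_lt_of_pos k (by exact_mod_cast hNpos)
        · rw [hg2]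
          rw [hUW] at hu
          exact (Finset.mem_filter.1 hu).2
    have hUWcard : UW.card = q ^ 2 - 1 := by
      have hWset : ∀ x : K, x ∈ (W : Set K) ↔ x = 0 ∨ ∃ u ∈ (↑UW : Set Kˣ), (u : K) = x := by
        intro x
        constructor
        · intro hx
          by_cases h0 : x = 0
          · exact Or.inl h0
          · refine Or.inr ⟨Units.mk0 x h0, ?_, rfl⟩
            rw [hUW]
            simp only [Finset.coe_filter, Finset.mem_univ, true_and, Set.mem_setOf_eq]
            exact hx
        · rintro (rfl | ⟨u, hu, rfl⟩)
          · exact W.zero_mem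
          · rw [hUW] at hu
            simp only [Finset.coe_filter, Finset.mem_univ, true_and, Set.mem_setOf_eq] at hu
            exact hu
      have hc2 := hcount (W : Set K) (↑UW) hWset
      rw [Set.ncard_coe_finset] at hc2
      have hWn : (W : Set K).ncard = q ^ 2 := by
        rw [← Nat.card_coe_set_eq]
        have e : Nat.card (W : Set K) = Nat.card W := rfl
        rw [e, Nat.card_eq_fintype_card, hWcard]
      omega
    have hTD : T.card = D.card * (q - 1) := by
      have hmapsto : ∀ i ∈ T, i % n ∈ D := by
        intro i hi
        rw [hmemD]
        exact ⟨Nat.mod_lt _ hnpos, (hper i).1 (Finset.mem_filter.1 hi).2⟩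
      rw [Finset.card_eq_sum_card_fiberwise hmapsto]
      have hfib : ∀ j ∈ D, (T.filter (fun i => i % n = j)).card = q - 1 := by
        intro j hj
        obtain ⟨hjn, hjW⟩ := (hmemD j).1 hj
        have := Finset.card_bij' (s := T.filter (fun i => i % n = j))
          (t := Finset.range (q - 1))
          (fun i _ => i / n) (fun k _ => j + n * k) ?_ ?_ ?_ ?_
        · rw [this, Finset.card_range]
        · intro i hi
          obtain ⟨hiT, hij⟩ := Finset.mem_filter.1 hi
          obtain ⟨hiN, _⟩ := Finset.mem_filter.1 hiT
          rw [Finset.mem_range] at hiN ⊢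
          rw [Nat.div_lt_iff_lt_mul hnpos, Nat.mul_comm]
          rw [hNn] at hiN
          omega
        · intro k hk
          rw [Finset.mem_range] at hk
          have hlt2 : j + n * k < N := by
            have h6 : n * (k + 1) ≤ n * (q - 1) := Nat.mul_le_mul_left n (by omega)
            rw [hNn]
            have h7 : n * (k + 1) = n * k + n := by ring
            omega
          have hmod : (j + n * k) % n = j := by
            rw [Nat.add_mul_mod_self_left, Nat.mod_eq_of_lt hjn]
          refine Finset.mem_filter.2 ⟨Finset.mem_filter.2 ⟨Finset.mem_range.2 hlt2, ?_⟩, hmod⟩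
          rw [hper, hmod]
          exact hjW
        · intro i hi
          obtain ⟨_, hij⟩ := Finset.mem_filter.1 hi
          have h8 := Nat.div_add_mod i n
          show j + n * (i / n) = i
          omega
        · intro k hk
          show (j + n * k) / n = k
          rw [Nat.add_mul_div_left _ _ hnpos, Nat.div_eq_of_lt hjn]
          omega
      rw [Finset.sum_congr rfl hfib, Finset.sum_const, smul_eq_mul]
    have hq1 : (q + 1) * (q - 1) = q ^ 2 - 1 := by
      obtain ⟨m, rfl⟩ : ∃ m, q = m + 2 := ⟨q - 2, by omega⟩
      have h21 : m + 2 - 1 = m + 1 := by omega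
      rw [h21]
      have e0 : (m + 2) ^ 2 = m ^ 2 + 4 * m + 4 := by ring
      have e1 : (m + 2 + 1) * (m + 1) = m ^ 2 + 4 * m + 3 := by ring
      omega
    have hfinal : D.card * (q - 1) = (q + 1) * (q - 1) := by
      rw [← hTD, hTcard, hUWcard, hq1]
    exact Nat.eq_of_mul_eq_mul_right (by omega) hfinal
  exact ⟨D, fun x hx => ((hmemD x).1 hx).1, hcardD, huniq⟩

lemma singer_exists (p : ℕ) (hp : IsPrimePow p) :
    ∃ D : Finset ℕ, (∀ x ∈ D, x < p ^ 2 + p + 1) ∧ D.card = p + 1 ∧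
      (∀ x ∈ D, ∀ y ∈ D, ∀ z ∈ D, ∀ w ∈ D, x ≠ y →
        ((p ^ 2 + p + 1 : ℕ) : ℤ) ∣ ((x : ℤ) - y) - ((z : ℤ) - w) → x = z ∧ y = w) := by
  obtain ⟨r, e, hr, he, rfl⟩ := hp
  haveI : Fact r.Prime := ⟨hr.nat_prime⟩
  set K := GaloisField r (3 * e) with hK
  haveI : Fintype K := Fintype.ofFinite K
  haveI : DecidableEq K := Classical.decEq K
  have hrq : 0 < r ^ e := pow_pos hr.nat_prime.pos e
  have hq2 : 2 ≤ r ^ e :=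
    le_trans hr.nat_prime.two_le (Nat.le_self_pow (by omega) r)
  have hcardK : Fintype.card K = (r ^ e) ^ 3 := by
    rw [← Nat.card_eq_fintype_card, GaloisField.card r (3 * e) (by omega), mul_comm 3 e, pow_mul]
  let F : Subfield K :=
    { carrier := {x : K | x ^ r ^ e = x}
      mul_mem' := by
        intro a b ha hb
        simp only [Set.mem_setOf_eq] at *
        rw [mul_pow, ha, hb]
      one_mem' := by simp only [Set.mem_setOf_eq, one_pow]
      add_mem' := by
        intro a b ha hb
        simp only [Set.mem_setOf_eq] at *
        rw [add_pow_char_pow, ha, hb]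
      zero_mem' := by
        simp only [Set.mem_setOf_eq]
        exact zero_pow (by omega)
      neg_mem' := by
        intro a ha
        simp only [Set.mem_setOf_eq] at *
        have h1 := sub_pow_char_pow (p := r) (0 : K) a e
        rw [zero_sub, zero_pow (show r ^ e ≠ 0 by omega), zero_sub] at h1
        rw [h1, ha]
      inv_mem' := by
        intro a ha
        simp only [Set.mem_setOf_eq] at *
        rw [inv_pow, ha] }
  exact singer_abstract (r ^ e) hq2 K F (fun x => Iff.rfl) hcardK

theorem H_primePow_succ (p : ℕ) (hp : IsPrimePow p) :
    H (p + 1) p = p ^ 2 + p := by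
  have hp2 : 2 ≤ p := hp.two_le
  obtain ⟨D, h1, h2, h3⟩ := singer_exists p hp
  have hup : HasDGR (p + 1) p (p ^ 2 + p) := dgr_of_singer p hp2 D h1 h2 h3
  have hpos : 0 < p ^ 2 + p := by positivity
  have hmem : (p ^ 2 + p) ∈ {n : ℕ | 0 < n ∧ HasDGR (p + 1) p n} := ⟨hpos, hup⟩
  refine le_antisymm (Nat.sInf_le hmem) (le_csInf ⟨_, hmem⟩ ?_)
  rintro b ⟨hbpos, hb⟩
  have := hasDGR_le (p + 1) p b hb
  nlinarith
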